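/- Let μ be a compact-finite deficient topological measure on a locally compact Hausdorff space X, K a compact set, and f, g continuous nonnegative compactly supported functions on X with supp f ⊆ K and supp g ⊆ K. Then |∫_K g dμ − ∫_K f dμ| ≤ ‖f − g‖_∞ · μ(K). -/

import Mathlib

open MeasureTheory Set Filter Topology ENNReal

/-- A deficient topological measure on a topological space `X`: a set function with values in
`[0,∞]` (recorded on all sets, but constrained only on open and closed sets) that is finitely
additive on disjoint compact sets, inner regular on open sets with respect to compact sets,
and outer regular on closed sets with respect to open sets. -/
structure DeficientTopologicalMeasure (X : Type*) [TopologicalSpace X] where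
  m : Set X → ℝ≥0∞
  additive : ∀ ⦃C K : Set X⦄, IsCompact C → IsCompact K → Disjoint C K →
    m (C ∪ K) = m C + m K
  innerRegular : ∀ ⦃U : Set X⦄, IsOpen U →
    m U = ⨆ (K : Set X) (_ : IsCompact K) (_ : K ⊆ U), m K
  outerRegular : ∀ ⦃F : Set X⦄, IsClosed F →
    m F = ⨅ (U : Set X) (_ : IsOpen U) (_ : F ⊆ U), m U

/-- Monotonicity: compact inside closed. -/
theorem dtm_mono {X : Type*} [TopologicalSpace X] (μ : DeficientTopologicalMeasure X)
    {C F : Set X} (hC : IsCompact C) (hF : IsClosed F) (h : C ⊆ F) : μ.m C ≤ μ.m F := by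
  rw [μ.outerRegular hF]
  refine le_iInf fun U => le_iInf fun hU => le_iInf fun hFU => ?_
  rw [μ.innerRegular hU]
  exact le_iSup_of_le C (le_iSup_of_le hC (le_iSup_of_le (h.trans hFU) le_rfl))

theorem dtm_empty {X : Type*} [TopologicalSpace X] (μ : DeficientTopologicalMeasure X)
    (h0 : μ.m ∅ < ∞) : μ.m ∅ = 0 := by
  have h := μ.additive isCompact_empty isCompact_empty disjoint_bot_left
  rw [union_empty] at h
  nth_rewrite 1 [← add_zero (μ.m ∅)] at h
  exact ((ENNReal.add_right_inj h0.ne).1 h).symm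

theorem dtm_key {X : Type*} [TopologicalSpace X] [T2Space X]
    (μ : DeficientTopologicalMeasure X)
    (K : Set X) (hK : IsCompact K)
    (f g : X → ℝ) (hf : Continuous f) (hg : Continuous g)
    (c : ℝ) (hc : 0 ≤ c) (hfg : ∀ x, g x ≤ f x + c) :
    (∫⁻ t in Ioi (0:ℝ), μ.m (K ∩ g ⁻¹' Ici t)) ≤
      (∫⁻ t in Ioi (0:ℝ), μ.m (K ∩ f ⁻¹' Ici t)) + ENNReal.ofReal c * μ.m K := by
  rw [← Ioc_union_Ioi_eq_Ioi hc,
    lintegral_union measurableSet_Ioi (Ioc_disjoint_Ioi le_rfl)]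
  have h1 : (∫⁻ t in Ioc (0:ℝ) c, μ.m (K ∩ g ⁻¹' Ici t)) ≤ ENNReal.ofReal c * μ.m K := by
    calc (∫⁻ t in Ioc (0:ℝ) c, μ.m (K ∩ g ⁻¹' Ici t))
        ≤ ∫⁻ _ in Ioc (0:ℝ) c, μ.m K := by
          refine lintegral_mono fun t => ?_
          exact dtm_mono μ (hK.inter_right (isClosed_Ici.preimage hg)) hK.isClosed
            inter_subset_left
      _ = ENNReal.ofReal c * μ.m K := by
          rw [setLIntegral_const, Real.volume_Ioc, sub_zero, mul_comm]
  have h2 : (∫⁻ t in Ioi c, μ.m (K ∩ g ⁻¹' Ici t)) ≤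
      ∫⁻ t in Ioi (0:ℝ), μ.m (K ∩ f ⁻¹' Ici t) := by
    have heq : (∫⁻ t in Ioi c, μ.m (K ∩ f ⁻¹' Ici (t - c))) =
        ∫⁻ s in Ioi (0:ℝ), μ.m (K ∩ f ⁻¹' Ici s) := by
      have hmp : MeasurePreserving (fun t : ℝ => t - c) volume volume :=
        measurePreserving_sub_right volume c
      have := hmp.setLIntegral_comp_preimage_emb
        (MeasurableEquiv.subRight c).measurableEmbedding
        (fun s => μ.m (K ∩ f ⁻¹' Ici s)) (Ioi (0:ℝ))
      rw [preimage_sub_const_Ioi, zero_add] at this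
      exact this
    rw [← heq]
    refine lintegral_mono_ae ((ae_restrict_iff' measurableSet_Ioi).2
      (Eventually.of_forall fun t ht => ?_))
    refine dtm_mono μ (hK.inter_right (isClosed_Ici.preimage hg))
      (hK.isClosed.inter (isClosed_Ici.preimage hf)) (inter_subset_inter_right _ ?_)
    intro x hx
    have := hfg x
    simp only [mem_preimage, mem_Ici] at hx ⊢
    linarith
  calc _ ≤ ENNReal.ofReal c * μ.m K + (∫⁻ t in Ioi (0:ℝ), μ.m (K ∩ f ⁻¹' Ici t)) :=
        add_le_add h1 h2
    _ = _ := by rw [Ioc_union_Ioi_eq_Ioi hc, add_comm]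

theorem dtm_fin {X : Type*} [TopologicalSpace X] [T2Space X]
    (μ : DeficientTopologicalMeasure X)
    (K : Set X) (hK : IsCompact K) (hmK : μ.m K < ∞) (hmE : μ.m ∅ = 0)
    (f : X → ℝ) (hf : Continuous f) (B : ℝ) (hB : 0 ≤ B) (hfB : ∀ x, f x ≤ B) :
    (∫⁻ t in Ioi (0:ℝ), μ.m (K ∩ f ⁻¹' Ici t)) < ∞ := by
  rw [← Ioc_union_Ioi_eq_Ioi hB,
    lintegral_union measurableSet_Ioi (Ioc_disjoint_Ioi le_rfl)]
  have h1 : (∫⁻ t in Ioc (0:ℝ) B, μ.m (K ∩ f ⁻¹' Ici t)) ≤ ENNReal.ofReal B * μ.m K := by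
    calc (∫⁻ t in Ioc (0:ℝ) B, μ.m (K ∩ f ⁻¹' Ici t))
        ≤ ∫⁻ _ in Ioc (0:ℝ) B, μ.m K :=
          lintegral_mono fun t => dtm_mono μ (hK.inter_right (isClosed_Ici.preimage hf))
            hK.isClosed inter_subset_left
      _ = ENNReal.ofReal B * μ.m K := by
          rw [setLIntegral_const, Real.volume_Ioc, sub_zero, mul_comm]
  have h2 : (∫⁻ t in Ioi B, μ.m (K ∩ f ⁻¹' Ici t)) = 0 := by
    rw [setLIntegral_congr_fun measurableSet_Ioi
      (fun t ht => ?_), lintegral_zero]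
    have : K ∩ f ⁻¹' Ici t = ∅ := by
      ext x
      simp only [mem_inter_iff, mem_preimage, mem_Ici, mem_empty_iff_false, iff_false]
      rintro ⟨-, hx⟩
      exact absurd hx (not_le.2 (lt_of_le_of_lt (hfB x) ht))
    rw [this, hmE]
  rw [h2, add_zero]
  exact lt_of_le_of_lt h1 (ENNReal.mul_lt_top ofReal_lt_top hmK)

theorem stmt8 {X : Type*} [TopologicalSpace X] [LocallyCompactSpace X] [T2Space X]
    (μ : DeficientTopologicalMeasure X)
    (hcf : ∀ K : Set X, IsCompact K → μ.m K < ∞)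
    (K : Set X) (hK : IsCompact K)
    (f g : X → ℝ) (hf : Continuous f) (hg : Continuous g)
    (hf0 : ∀ x, 0 ≤ f x) (hg0 : ∀ x, 0 ≤ g x)
    (hfc : HasCompactSupport f) (hgc : HasCompactSupport g)
    (hfK : tsupport f ⊆ K) (hgK : tsupport g ⊆ K) :
    |(∫⁻ t in Ioi (0 : ℝ), μ.m (K ∩ g ⁻¹' (Ici t))).toReal -
        (∫⁻ t in Ioi (0 : ℝ), μ.m (K ∩ f ⁻¹' (Ici t))).toReal| ≤
      (⨆ x, |f x - g x|) * (μ.m K).toReal := by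
  have hmK := hcf K hK
  have hmE : μ.m ∅ = 0 := dtm_empty μ (hcf ∅ isCompact_empty)
  set c : ℝ := ⨆ x, |f x - g x| with hcdef
  have hfgc : HasCompactSupport (f - g) := by
    rw [sub_eq_add_neg]; exact hfc.add hgc.neg
  obtain ⟨C, hC⟩ := ((hf.sub hg).abs).bounded_above_of_compact_support hfgc.abs
  have hbdd : BddAbove (range fun x => |f x - g x|) :=
    ⟨C, by rintro _ ⟨x, rfl⟩
           have := hC x
           rwa [Real.norm_eq_abs, abs_abs] at this⟩
  have habs : ∀ x, |f x - g x| ≤ c := fun x => le_ciSup hbdd x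
  have hc : 0 ≤ c := Real.iSup_nonneg fun x => abs_nonneg _
  -- finiteness
  obtain ⟨Bf, hBf⟩ := hf.bounded_above_of_compact_support hfc
  obtain ⟨Bg, hBg⟩ := hg.bounded_above_of_compact_support hgc
  have hIf : (∫⁻ t in Ioi (0:ℝ), μ.m (K ∩ f ⁻¹' Ici t)) < ∞ :=
    dtm_fin μ K hK hmK hmE f hf (max Bf 0) (le_max_right _ _)
      fun x => (Real.le_norm_self _).trans ((hBf x).trans (le_max_left _ _))
  have hIg : (∫⁻ t in Ioi (0:ℝ), μ.m (K ∩ g ⁻¹' Ici t)) < ∞ :=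
    dtm_fin μ K hK hmK hmE g hg (max Bg 0) (le_max_right _ _)
      fun x => (Real.le_norm_self _).trans ((hBg x).trans (le_max_left _ _))
  have hcm : ENNReal.ofReal c * μ.m K ≠ ∞ := ENNReal.mul_ne_top ofReal_ne_top hmK.ne
  have key1 := dtm_key μ K hK f g hf hg c hc fun x => by
    have := abs_le.1 (habs x); linarith
  have key2 := dtm_key μ K hK g f hg hf c hc fun x => by
    have := abs_le.1 (habs x); linarith
  rw [abs_sub_le_iff]
  constructor
  · rw [sub_le_iff_le_add]
    have := ENNReal.toReal_le_toReal hIg.ne (ENNReal.add_ne_top.2 ⟨hIf.ne, hcm⟩) |>.2 key1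
    rwa [ENNReal.toReal_add hIf.ne hcm, ENNReal.toReal_mul, ENNReal.toReal_ofReal hc,
      add_comm] at this
  · rw [sub_le_iff_le_add]
    have := ENNReal.toReal_le_toReal hIf.ne (ENNReal.add_ne_top.2 ⟨hIg.ne, hcm⟩) |>.2 key2
    rwa [ENNReal.toReal_add hIg.ne hcm, ENNReal.toReal_mul, ENNReal.toReal_ofReal hc,
      add_comm] at this
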